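/- On the critical line s = 1/2 + iu, the multiplicator m(s) = Γ(−s/2 + ν/2 + 1)·Γ(−s/2 − ν/2 + 1/2) / (Γ(1/2 − s/2)·Γ(1 − s/2)) satisfies |m(1/2 + iu)| = √(cosh(π u)/(cosh(π u) − sin(π ν))) for all real u and real ν with cosh(π u) > sin(π ν). -/

import Mathlib

open Complex Real

/-- On the critical line `s = 1/2 + iu`, the multiplicator
`m(s) = Γ(−s/2+ν/2+1)Γ(−s/2−ν/2+1/2)/(Γ(1/2−s/2)Γ(1−s/2))` has modulus
`√(cosh(π u)/(cosh(π u) − sin(π ν)))`. -/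
theorem multiplicator_abs_on_critical_line (u ν : ℝ)
    (h : Real.sin (Real.pi * ν) < Real.cosh (Real.pi * u)) :
    ‖Complex.Gamma (-(1 / 2 + Complex.I * ↑u) / 2 + ↑ν / 2 + 1) *
          Complex.Gamma (-(1 / 2 + Complex.I * ↑u) / 2 - ↑ν / 2 + 1 / 2) /
        (Complex.Gamma (1 / 2 - (1 / 2 + Complex.I * ↑u) / 2) *
          Complex.Gamma (1 - (1 / 2 + Complex.I * ↑u) / 2))‖ =
      Real.sqrt (Real.cosh (Real.pi * u) /
        (Real.cosh (Real.pi * u) - Real.sin (Real.pi * ν))) := by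
  set c := Real.cosh (Real.pi * u) with hc
  set sn := Real.sin (Real.pi * ν) with hsn
  set w1 : ℂ := -(1 / 2 + Complex.I * ↑u) / 2 + ↑ν / 2 + 1 with hw1
  set w2 : ℂ := -(1 / 2 + Complex.I * ↑u) / 2 - ↑ν / 2 + 1 / 2 with hw2
  set d1 : ℂ := 1 / 2 - (1 / 2 + Complex.I * ↑u) / 2 with hd1
  set d2 : ℂ := 1 - (1 / 2 + Complex.I * ↑u) / 2 with hd2
  set w1' : ℂ := -(1 / 2 - Complex.I * ↑u) / 2 + ↑ν / 2 + 1 with hw1'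
  set w2' : ℂ := -(1 / 2 - Complex.I * ↑u) / 2 - ↑ν / 2 + 1 / 2 with hw2'
  set d1' : ℂ := 1 / 2 - (1 / 2 - Complex.I * ↑u) / 2 with hd1'
  set d2' : ℂ := 1 - (1 / 2 - Complex.I * ↑u) / 2 with hd2'
  set E : ℂ := Complex.Gamma w1 * Complex.Gamma w2 / (Complex.Gamma d1 * Complex.Gamma d2) with hE
  have prodsin : ∀ P Q : ℂ, Complex.sin P * Complex.sin Q
      = (Complex.cos (P - Q) - Complex.cos (P + Q)) / 2 := by
    intro P Q; rw [Complex.cos_sub, Complex.cos_add]; ring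
  -- reflection identities
  have r1 : Complex.Gamma w2' * Complex.Gamma w1 = ↑π / Complex.sin (↑π * w2') := by
    have := Complex.Gamma_mul_Gamma_one_sub w2'
    rwa [show (1 : ℂ) - w2' = w1 by rw [hw1, hw2']; ring] at this
  have r2 : Complex.Gamma w2 * Complex.Gamma w1' = ↑π / Complex.sin (↑π * w2) := by
    have := Complex.Gamma_mul_Gamma_one_sub w2
    rwa [show (1 : ℂ) - w2 = w1' by rw [hw1', hw2]; ring] at this
  have r3 : Complex.Gamma d1 * Complex.Gamma d2' = ↑π / Complex.sin (↑π * d1) := by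
    have := Complex.Gamma_mul_Gamma_one_sub d1
    rwa [show (1 : ℂ) - d1 = d2' by rw [hd1, hd2']; ring] at this
  have r4 : Complex.Gamma d1' * Complex.Gamma d2 = ↑π / Complex.sin (↑π * d1') := by
    have := Complex.Gamma_mul_Gamma_one_sub d1'
    rwa [show (1 : ℂ) - d1' = d2 by rw [hd1', hd2]; ring] at this
  -- sine products
  have hS : Complex.sin (↑π * w2') * Complex.sin (↑π * w2) = (↑c - ↑sn) / 2 := by
    rw [prodsin, show (↑π * w2' - ↑π * w2 : ℂ) = ↑(Real.pi * u) * Complex.I by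
        rw [hw2, hw2']; push_cast; ring,
      show (↑π * w2' + ↑π * w2 : ℂ) = ↑π / 2 - ↑(Real.pi * ν) by
        rw [hw2, hw2']; push_cast; ring,
      Complex.cos_mul_I, Complex.cos_pi_div_two_sub, ← Complex.ofReal_cosh,
      ← Complex.ofReal_sin, hc, hsn]
  have hT : Complex.sin (↑π * d1') * Complex.sin (↑π * d1) = ↑c / 2 := by
    rw [prodsin, show (↑π * d1' - ↑π * d1 : ℂ) = ↑(Real.pi * u) * Complex.I by
        rw [hd1, hd1']; push_cast; ring,
      show (↑π * d1' + ↑π * d1 : ℂ) = ↑π / 2 by rw [hd1, hd1']; push_cast; ring,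
      Complex.cos_mul_I, Complex.cos_pi_div_two, ← Complex.ofReal_cosh, hc]
    ring
  -- conjugate of E
  have hconj : (starRingEnd ℂ) E = Complex.Gamma w1' * Complex.Gamma w2' /
      (Complex.Gamma d1' * Complex.Gamma d2') := by
    rw [hE, map_div₀, map_mul, map_mul, ← Complex.Gamma_conj, ← Complex.Gamma_conj,
      ← Complex.Gamma_conj, ← Complex.Gamma_conj]
    congr 1
    · congr 1
      · congr 1
        rw [hw1, hw1']; simp [map_add, map_sub, map_div₀, map_ofNat, map_one, Complex.conj_I]; ring
      · congr 1
        rw [hw2, hw2']; simp [map_add, map_sub, map_div₀, map_ofNat, map_one, Complex.conj_I]; ring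
    · congr 1
      · congr 1
        rw [hd1, hd1']; simp [map_sub, map_div₀, map_ofNat, map_one, Complex.conj_I]; ring
      · congr 1
        rw [hd2, hd2']; simp [map_sub, map_div₀, map_ofNat, map_one, Complex.conj_I]; ring
  -- nonvanishing facts
  have hπ : (π : ℂ) ≠ 0 := Complex.ofReal_ne_zero.2 Real.pi_ne_zero
  have hcs : (↑c - ↑sn : ℂ) ≠ 0 := by
    rw [← Complex.ofReal_sub]
    exact Complex.ofReal_ne_zero.2 (by linarith)
  have hc0 : (↑c : ℂ) ≠ 0 := Complex.ofReal_ne_zero.2 (by positivity)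
  have hSne : Complex.sin (↑π * w2') * Complex.sin (↑π * w2) ≠ 0 := by
    rw [hS]; exact div_ne_zero hcs two_ne_zero
  have hTne : Complex.sin (↑π * d1') * Complex.sin (↑π * d1) ≠ 0 := by
    rw [hT]; exact div_ne_zero hc0 two_ne_zero
  have hS1 : Complex.sin (↑π * w2') ≠ 0 := fun e => hSne (by rw [e, zero_mul])
  have hS2 : Complex.sin (↑π * w2) ≠ 0 := fun e => hSne (by rw [e, mul_zero])
  have hT1 : Complex.sin (↑π * d1') ≠ 0 := fun e => hTne (by rw [e, zero_mul])
  have hT2 : Complex.sin (↑π * d1) ≠ 0 := fun e => hTne (by rw [e, mul_zero])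
  -- key complex identity
  have key : E * (starRingEnd ℂ) E = ↑c / (↑c - ↑sn) := by
    rw [hconj, hE, div_mul_div_comm]
    have hnum : Complex.Gamma w1 * Complex.Gamma w2 * (Complex.Gamma w1' * Complex.Gamma w2')
        = ↑π ^ 2 / ((↑c - ↑sn) / 2) := by
      calc Complex.Gamma w1 * Complex.Gamma w2 * (Complex.Gamma w1' * Complex.Gamma w2')
          = (Complex.Gamma w2' * Complex.Gamma w1) * (Complex.Gamma w2 * Complex.Gamma w1') := by
            ring
        _ = ↑π / Complex.sin (↑π * w2') * (↑π / Complex.sin (↑π * w2)) := by rw [r1, r2]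
        _ = ↑π ^ 2 / (Complex.sin (↑π * w2') * Complex.sin (↑π * w2)) := by
            rw [div_mul_div_comm]; ring_nf
        _ = ↑π ^ 2 / ((↑c - ↑sn) / 2) := by rw [hS]
    have hden : Complex.Gamma d1 * Complex.Gamma d2 * (Complex.Gamma d1' * Complex.Gamma d2')
        = ↑π ^ 2 / (↑c / 2) := by
      calc Complex.Gamma d1 * Complex.Gamma d2 * (Complex.Gamma d1' * Complex.Gamma d2')
          = (Complex.Gamma d1 * Complex.Gamma d2') * (Complex.Gamma d1' * Complex.Gamma d2) := by
            ring
        _ = ↑π / Complex.sin (↑π * d1) * (↑π / Complex.sin (↑π * d1')) := by rw [r3, r4]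
        _ = ↑π ^ 2 / (Complex.sin (↑π * d1') * Complex.sin (↑π * d1)) := by
            rw [div_mul_div_comm]; ring_nf
        _ = ↑π ^ 2 / (↑c / 2) := by rw [hT]
    rw [hnum, hden]
    field_simp
  -- pass to real numbers
  have hre : ‖E‖ ^ 2 = c / (c - sn) := by
    have h1 : ((‖E‖ ^ 2 : ℝ) : ℂ) = ↑(c / (c - sn)) := by
      rw [show ‖E‖ ^ 2 = Complex.normSq E by rw [Complex.sq_norm],
        ← Complex.mul_conj, key]
      push_cast; ring
    exact_mod_cast h1
  rw [← hre, Real.sqrt_sq (norm_nonneg _)]
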